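/- arXiv:2502.12292 — 6 statements merged into one kernel-verified Lean document; each statement's English description precedes it below -/
import Mathlib

section
/- Let G be a finite group acting measurably on a measurable space Θ, let μ be a G-invariant probability measure on Θ, and let T ∈ ℕ. Consider the pushforward of the product measure μ ⊗ (Unif(G))^{⊗T} under the map (θ, g₁, …, g_T) ↦ (θ, g₁·θ, …, g_T·θ) ∈ Θ^{T+1}, where Unif(G) is the uniform probability measure on G. This pushforward measure on Θ^{T+1} is exchangeable: it is invariant under permuting the T+1 coordinates, i.e., for every permutation σ of {0, 1, …, T}, the pushforward under the coordinate permutation induced by σ equals the measure itself. -/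
open MeasureTheory
open scoped ENNReal

section Aux

variable {G : Type*} [Group G]

/-- Extend a vector of group elements by `1` in position `0`. -/
def ext1 {T : ℕ} (v : Fin T → G) : Fin (T + 1) → G := Fin.cases 1 v

@[simp] lemma ext1_zero {T : ℕ} (v : Fin T → G) : ext1 v 0 = 1 := rfl

@[simp] lemma ext1_succ {T : ℕ} (v : Fin T → G) (t : Fin T) : ext1 v t.succ = v t := by
  simp [ext1]

/-- The bijection on `G^T` coming from a permutation `σ` of `Fin (T+1)`. -/
def permB {T : ℕ} (σ : Equiv.Perm (Fin (T + 1))) (v : Fin T → G) : Fin T → G :=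
  fun t => ext1 v (σ t.succ) * (ext1 v (σ 0))⁻¹

lemma ext1_permB {T : ℕ} (σ : Equiv.Perm (Fin (T + 1))) (v : Fin T → G) :
    ext1 (permB σ v) = fun i => ext1 v (σ i) * (ext1 v (σ 0))⁻¹ := by
  funext i
  induction i using Fin.cases with
  | zero => simp
  | succ t => simp [permB]

lemma permB_left_inv {T : ℕ} (σ : Equiv.Perm (Fin (T + 1))) (v : Fin T → G) :
    permB σ⁻¹ (permB σ v) = v := by
  funext t
  simp only [permB, ext1_permB, Equiv.Perm.coe_inv, Equiv.apply_symm_apply]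
  group
  simp

/-- `permB σ` as an equivalence. -/
def permBEquiv {T : ℕ} (σ : Equiv.Perm (Fin (T + 1))) : (Fin T → G) ≃ (Fin T → G) where
  toFun := permB σ
  invFun := permB σ⁻¹
  left_inv := permB_left_inv σ
  right_inv := fun v => by
    have := permB_left_inv (G := G) σ⁻¹ v
    rwa [inv_inv] at this

end Aux

lemma prod_smul_right' {α β : Type*} [MeasurableSpace α] [MeasurableSpace β]
    (μ : Measure α) (ν : Measure β) [SFinite ν] (c : ℝ≥0∞) :
    μ.prod (c • ν) = c • μ.prod ν := by
  ext s hs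
  rw [Measure.smul_apply, Measure.prod_apply hs, Measure.prod_apply hs, smul_eq_mul,
    ← lintegral_const_mul c (measurable_measure_prodMk_left hs)]
  simp

lemma pi_uniform_eq_sum {G : Type*} [Group G] [Fintype G] [MeasurableSpace G] (T : ℕ) :
    (Measure.pi fun _ : Fin T => (PMF.uniformOfFintype G).toMeasure) =
      Measure.sum (fun v : Fin T → G =>
        ((Fintype.card G : ℝ≥0∞)⁻¹ ^ T) • Measure.dirac v) := by
  classical
  rw [Measure.sum_fintype]
  refine Measure.pi_eq fun s hs => ?_
  have hms : MeasurableSet (Set.pi Set.univ s) := MeasurableSet.univ_pi hs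
  rw [Measure.finset_sum_apply]
  simp only [Measure.smul_apply, smul_eq_mul, Measure.dirac_apply' _ hms]
  have key : ∀ v : Fin T → G,
      Set.indicator (Set.pi Set.univ s) (1 : (Fin T → G) → ℝ≥0∞) v =
        ∏ i, Set.indicator (s i) (1 : G → ℝ≥0∞) (v i) := by
    intro v
    by_cases h : v ∈ Set.pi Set.univ s
    · rw [Set.indicator_of_mem h, eq_comm]
      refine Finset.prod_eq_one fun i _ => ?_
      rw [Set.indicator_of_mem (h i (Set.mem_univ i))]
      rfl
    · rw [Set.indicator_of_notMem h, eq_comm]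
      obtain ⟨i, hi⟩ : ∃ i, v i ∉ s i := by simpa [Set.mem_pi] using h
      exact Finset.prod_eq_zero (Finset.mem_univ i) (by rw [Set.indicator_of_notMem hi])
  simp_rw [key]
  rw [← Finset.mul_sum, ← Fintype.piFinset_univ, ← Finset.prod_univ_sum]
  have hc : ((Fintype.card G : ℝ≥0∞)⁻¹ ^ T) = ∏ _i : Fin T, (Fintype.card G : ℝ≥0∞)⁻¹ := by
    rw [Finset.prod_const, Finset.card_univ, Fintype.card_fin]
  rw [hc, ← Finset.prod_mul_distrib]
  refine Finset.prod_congr rfl fun i _ => ?_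
  rw [PMF.toMeasure_apply _ (hs i), tsum_fintype, Finset.mul_sum]
  refine Finset.sum_congr rfl fun g _ => ?_
  simp [Set.indicator_apply, PMF.uniformOfFintype_apply, mul_ite]

/-- Exchangeability of `(X, g₁·X, …, g_T·X)` when `X ∼ μ` is `G`-invariant and the `gᵢ`
are i.i.d. uniform on the finite group `G`, independent of `X`. -/
theorem stmt_2 {G Θ : Type*} [Group G] [Fintype G] [MeasurableSpace G]
    [MeasurableSpace Θ] [MulAction G Θ]
    (hsmul : ∀ g : G, Measurable fun θ : Θ => g • θ)
    (μ : Measure Θ) [IsProbabilityMeasure μ]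
    (hinv : ∀ g : G, Measure.map (fun θ => g • θ) μ = μ)
    (T : ℕ)
    (ν : Measure (Fin (T + 1) → Θ))
    (hν : ν = Measure.map
        (fun p : Θ × (Fin T → G) => fun i : Fin (T + 1) =>
          Fin.cases p.1 (fun t => p.2 t • p.1) i)
        (μ.prod (Measure.pi fun _ : Fin T => (PMF.uniformOfFintype G).toMeasure))) :
    ∀ σ : Equiv.Perm (Fin (T + 1)),
      Measure.map (fun x : Fin (T + 1) → Θ => fun i => x (σ i)) ν = ν := by
  classical
  intro σ
  subst hν
  set w : ℝ≥0∞ := (Fintype.card G : ℝ≥0∞)⁻¹ ^ T with hw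
  have hw0 : w ≠ 0 :=
    pow_ne_zero T (ENNReal.inv_ne_zero.mpr (ENNReal.natCast_ne_top _))
  set π : Measure (Fin T → G) :=
    Measure.pi fun _ : Fin T => (PMF.uniformOfFintype G).toMeasure with hπdef
  set f : Θ × (Fin T → G) → (Fin (T + 1) → Θ) :=
    fun p => fun i : Fin (T + 1) => Fin.cases p.1 (fun t => p.2 t • p.1) i with hf
  set Φ : (Fin T → G) → Θ → (Fin (T + 1) → Θ) := fun v θ i => ext1 v i • θ with hΦ
  have hΦm : ∀ v, Measurable (Φ v) := fun v =>
    measurable_pi_lambda _ fun i => hsmul _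
  have hPm : Measurable (fun x : Fin (T + 1) → Θ => fun i => x (σ i)) :=
    measurable_pi_lambda _ fun i => measurable_pi_apply _
  have hπ : π = Measure.sum (fun v : Fin T → G => w • Measure.dirac v) :=
    pi_uniform_eq_sum T
  have hprod : μ.prod π =
      Measure.sum (fun v : Fin T → G => w • Measure.map (fun θ => (θ, v)) μ) := by
    rw [hπ, Measure.prod_sum_right]
    congr 1
    funext v
    rw [prod_smul_right', Measure.prod_dirac]
  by_cases hAE : AEMeasurable f (μ.prod π)
  · obtain ⟨g, hgm, hfg⟩ := hAE
    have hmain : Measure.map f (μ.prod π) =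
        Measure.sum (fun v : Fin T → G => w • Measure.map (Φ v) μ) := by
      rw [Measure.map_congr hfg, hprod, Measure.map_sum hgm.aemeasurable]
      congr 1
      funext v
      rw [Measure.map_smul, Measure.map_map hgm measurable_prodMk_right]
      congr 1
      have hac : Measure.map (fun θ => (θ, v)) μ ≪ μ.prod π := by
        have h1 : (w • Measure.map (fun θ => (θ, v)) μ) ≤ μ.prod π := by
          rw [hprod]; exact Measure.le_sum _ v
        exact (Measure.absolutelyContinuous_smul hw0).trans h1.absolutelyContinuous
      have hae2 : f =ᵐ[Measure.map (fun θ => (θ, v)) μ] g := hfg.filter_mono hac.ae_le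
      have hae3 : (fun θ => f (θ, v)) =ᵐ[μ] (fun θ => g (θ, v)) :=
        ae_of_ae_map measurable_prodMk_right.aemeasurable hae2
      have hfun : (fun θ => f (θ, v)) = Φ v := by
        funext θ
        funext i
        induction i using Fin.cases with
        | zero => simp [hf, hΦ]
        | succ t => simp [hf, hΦ]
      have h4 : (g ∘ fun θ => (θ, v)) =ᵐ[μ] Φ v := by
        rw [← hfun]; exact hae3.symm
      exact Measure.map_congr h4
    rw [hmain, Measure.map_sum hPm.aemeasurable]
    have hterm : ∀ v : Fin T → G,
        Measure.map (fun x : Fin (T + 1) → Θ => fun i => x (σ i))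
            (w • Measure.map (Φ v) μ) = w • Measure.map (Φ (permB σ v)) μ := by
      intro v
      rw [Measure.map_smul, Measure.map_map hPm (hΦm v)]
      congr 1
      have hcomp : ((fun x : Fin (T + 1) → Θ => fun i => x (σ i)) ∘ Φ v) =
          (Φ (permB σ v)) ∘ (fun θ => ext1 v (σ 0) • θ) := by
        funext θ
        funext i
        simp only [Function.comp, hΦ, ext1_permB]
        rw [← mul_smul, inv_mul_cancel_right]
      rw [hcomp, ← Measure.map_map (hΦm _) (hsmul _), hinv]
    simp_rw [hterm]
    rw [Measure.sum_fintype, Measure.sum_fintype]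
    exact Equiv.sum_comp (permBEquiv (G := G) σ)
      (fun v => w • Measure.map (Φ v) μ)
  · rw [Measure.map_of_not_aemeasurable hAE]
    simp
end

section
/- Let the symmetric group S_n act measurably on a measurable space 𝒳, let X be a random element of 𝒳 whose law is invariant under the action of every element of S_n, let Y be a random element of a measurable space 𝒴 that is independent of X, and let F : 𝒳 × 𝒴 → S_n be measurable and equivariant in its first argument, meaning F(σ·x, y) = σ ∘ F(x, y) for all σ ∈ S_n, x ∈ 𝒳, y ∈ 𝒴. Then F(X, Y) is uniformly distributed on S_n. -/
open MeasureTheory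

/-- Theorem 2 core: if the law of `X` is invariant under the symmetric group `S_n` acting on
`𝒳`, `Y` is independent of `X`, and `F` is equivariant in its first argument, then
`F(X, Y)` is uniformly distributed on `S_n`. -/
theorem stmt_4 {n : ℕ} {𝒳 𝒴 Ω : Type*} [MeasurableSpace 𝒳] [MeasurableSpace 𝒴]
    [MeasurableSpace Ω] [MeasurableSpace (Equiv.Perm (Fin n))]
    [MulAction (Equiv.Perm (Fin n)) 𝒳]
    (hsmul : ∀ σ : Equiv.Perm (Fin n), Measurable fun x : 𝒳 => σ • x)
    (P : Measure Ω) [IsProbabilityMeasure P]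
    (X : Ω → 𝒳) (Y : Ω → 𝒴) (hX : Measurable X) (hY : Measurable Y)
    (hindep : ProbabilityTheory.IndepFun X Y P)
    (hinvX : ∀ σ : Equiv.Perm (Fin n),
      Measure.map (fun x => σ • x) (Measure.map X P) = Measure.map X P)
    (F : 𝒳 × 𝒴 → Equiv.Perm (Fin n)) (hF : Measurable F)
    (hFequiv : ∀ (σ : Equiv.Perm (Fin n)) (x : 𝒳) (y : 𝒴),
      F (σ • x, y) = σ * F (x, y)) :
    Measure.map (fun ω => F (X ω, Y ω)) P
      = (PMF.uniformOfFintype (Equiv.Perm (Fin n))).toMeasure := by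
  classical
  have hpair : ∀ σ : Equiv.Perm (Fin n),
      Measure.map (fun ω => (σ • X ω, Y ω)) P
        = Measure.map (fun ω => (X ω, Y ω)) P := by
    intro σ
    have hXσ : Measurable (fun ω => σ • X ω) := (hsmul σ).comp hX
    have hindep' : ProbabilityTheory.IndepFun (fun ω => σ • X ω) Y P :=
      hindep.comp (hsmul σ) measurable_id
    have h1 := (ProbabilityTheory.indepFun_iff_map_prod_eq_prod_map_map
      hXσ.aemeasurable hY.aemeasurable).1 hindep'
    have h2 := (ProbabilityTheory.indepFun_iff_map_prod_eq_prod_map_map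
      hX.aemeasurable hY.aemeasurable).1 hindep
    have hmapX : Measure.map (fun ω => σ • X ω) P = Measure.map X P := by
      rw [show (fun ω => σ • X ω) = (fun x : 𝒳 => σ • x) ∘ X from rfl,
        ← Measure.map_map (hsmul σ) hX, hinvX σ]
    rw [h1, h2, hmapX]
  have hcomp : ∀ σ : Equiv.Perm (Fin n),
      (fun ω => σ * F (X ω, Y ω)) = F ∘ (fun ω => (σ • X ω, Y ω)) := by
    intro σ; funext ω
    simp [Function.comp, (hFequiv σ (X ω) (Y ω)).symm]
  have hpairm : ∀ σ : Equiv.Perm (Fin n),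
      Measurable (fun ω => (σ • X ω, Y ω)) :=
    fun σ => ((hsmul σ).comp hX).prodMk hY
  have hmeas : ∀ σ : Equiv.Perm (Fin n),
      Measurable (fun ω => σ * F (X ω, Y ω)) := by
    intro σ; rw [hcomp σ]; exact hF.comp (hpairm σ)
  have hlaw : ∀ (σ : Equiv.Perm (Fin n)) (s : Set (Equiv.Perm (Fin n))),
      MeasurableSet s →
      P ((fun ω => σ * F (X ω, Y ω)) ⁻¹' s) = P ((fun ω => F (X ω, Y ω)) ⁻¹' s) := by
    intro σ s hs
    have hpairm' : Measurable (fun ω => (X ω, Y ω)) := hX.prodMk hY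
    calc P ((fun ω => σ * F (X ω, Y ω)) ⁻¹' s)
        = Measure.map (fun ω => (σ • X ω, Y ω)) P (F ⁻¹' s) := by
          rw [Measure.map_apply (hpairm σ) (hF hs), hcomp σ, Set.preimage_comp]
      _ = Measure.map (fun ω => (X ω, Y ω)) P (F ⁻¹' s) := by rw [hpair σ]
      _ = P ((fun ω => F (X ω, Y ω)) ⁻¹' s) := by
          rw [Measure.map_apply hpairm' (hF hs)]; rfl
  have hFm : Measurable (fun ω => F (X ω, Y ω)) := hF.comp (hX.prodMk hY)
  ext s hs
  rw [Measure.map_apply hFm hs,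
    PMF.toMeasure_apply (PMF.uniformOfFintype (Equiv.Perm (Fin n))) hs]
  have hfilter : Finset.filter (fun g => g ∈ s) Finset.univ = s.toFinset := by
    ext g; simp
  have hrhs : (∑' g : Equiv.Perm (Fin n),
        s.indicator (PMF.uniformOfFintype (Equiv.Perm (Fin n))) g)
      = (s.toFinset.card : ENNReal) / (Fintype.card (Equiv.Perm (Fin n)) : ENNReal) := by
    rw [tsum_fintype, Finset.sum_indicator_eq_sum_filter]
    simp only [PMF.uniformOfFintype_apply, Finset.sum_const, nsmul_eq_mul, hfilter]
    rw [ENNReal.div_eq_inv_mul, mul_comm]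
  rw [hrhs]
  have hsum1 : ∀ g : Equiv.Perm (Fin n),
      ∑ σ : Equiv.Perm (Fin n), s.indicator (1 : Equiv.Perm (Fin n) → ENNReal) (σ * g)
        = (s.toFinset.card : ENNReal) := by
    intro g
    rw [Fintype.sum_equiv (Equiv.mulRight g) _
      (fun τ => s.indicator (1 : Equiv.Perm (Fin n) → ENNReal) τ) (fun σ => by simp)]
    rw [Finset.sum_indicator_eq_sum_filter, hfilter]
    simp
  have hsum : ∑ σ : Equiv.Perm (Fin n), P ((fun ω => σ * F (X ω, Y ω)) ⁻¹' s)
      = (s.toFinset.card : ENNReal) := by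
    calc ∑ σ : Equiv.Perm (Fin n), P ((fun ω => σ * F (X ω, Y ω)) ⁻¹' s)
        = ∑ σ : Equiv.Perm (Fin n),
            ∫⁻ ω, s.indicator (1 : Equiv.Perm (Fin n) → ENNReal) (σ * F (X ω, Y ω)) ∂P := by
          refine Finset.sum_congr rfl fun σ _ => ?_
          rw [← lintegral_indicator_one ((hmeas σ) hs)]
          congr 1
      _ = ∫⁻ ω, ∑ σ : Equiv.Perm (Fin n),
            s.indicator (1 : Equiv.Perm (Fin n) → ENNReal) (σ * F (X ω, Y ω)) ∂P := by
          rw [lintegral_finset_sum]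
          intro σ _
          exact (measurable_const.indicator hs).comp (hmeas σ)
      _ = ∫⁻ _, (s.toFinset.card : ENNReal) ∂P := by
          congr 1; funext ω; exact hsum1 (F (X ω, Y ω))
      _ = (s.toFinset.card : ENNReal) := by simp
  rw [Finset.sum_congr rfl (fun σ _ => hlaw σ s hs), Finset.sum_const,
    Finset.card_univ, nsmul_eq_mul] at hsum
  have hcard : (Fintype.card (Equiv.Perm (Fin n)) : ENNReal) ≠ 0 := by
    exact_mod_cast Nat.cast_ne_zero.2 Fintype.card_ne_zero
  have hcard' : (Fintype.card (Equiv.Perm (Fin n)) : ENNReal) ≠ ⊤ := by simp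
  rw [ENNReal.eq_div_iff hcard hcard']
  exact hsum
end

section
/- Let G be a finite group acting measurably on a measurable space 𝒳, let X be a random element of 𝒳 whose law is G-invariant, and let f : 𝒳 → G be a measurable map satisfying f(g·x) = g · f(x) for all g ∈ G and x ∈ 𝒳. Then f(X) is uniformly distributed on G. -/
open MeasureTheory

/-- An equivariant statistic of a random variable with `G`-invariant law is uniformly
distributed on the finite group `G`. -/
theorem stmt_5 {G 𝒳 Ω : Type*} [Group G] [Fintype G] [MeasurableSpace G]
    [MeasurableSpace 𝒳] [MeasurableSpace Ω] [MulAction G 𝒳]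
    (hsmul : ∀ g : G, Measurable fun x : 𝒳 => g • x)
    (P : Measure Ω) [IsProbabilityMeasure P]
    (X : Ω → 𝒳) (hX : Measurable X)
    (hinvX : ∀ g : G, Measure.map (fun x => g • x) (Measure.map X P) = Measure.map X P)
    (f : 𝒳 → G) (hf : Measurable f)
    (hfequiv : ∀ (g : G) (x : 𝒳), f (g • x) = g * f x) :
    Measure.map (fun ω => f (X ω)) P = (PMF.uniformOfFintype G).toMeasure := by
  classical
  set μ := Measure.map (fun ω => f (X ω)) P with hμ
  -- measurability of ω ↦ g * f (X ω)
  have hmeas : ∀ g : G, Measurable fun ω => g * f (X ω) := by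
    intro g
    have : (fun ω => g * f (X ω)) = fun ω => f (g • X ω) := by
      funext ω; rw [hfequiv]
    rw [this]
    exact (hf.comp (hsmul g)).comp hX
  -- invariance of μ under left multiplication
  have hinv : ∀ g : G, Measure.map (fun ω => g * f (X ω)) P = μ := by
    intro g
    have h1 : (fun ω => g * f (X ω)) = f ∘ (fun x => g • x) ∘ X := by
      funext ω; simp [Function.comp, hfequiv]
    rw [h1, ← Function.comp_assoc,
      ← Measure.map_map (hf.comp (hsmul g)) hX,
      ← Measure.map_map hf (hsmul g), hinvX g, hμ, Measure.map_map hf hX]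
    rfl
  ext s hs
  rw [PMF.toMeasure_uniformOfFintype_apply s hs]
  have hcard : (Fintype.card G : ENNReal) ≠ 0 := by
    simp [Fintype.card_ne_zero]
  rw [ENNReal.eq_div_iff hcard (by simp)]
  -- |G| * μ s = ∑_g (map (g * f X) P) s
  calc (Fintype.card G : ENNReal) * μ s
      = ∑ g : G, μ s := by rw [Finset.sum_const, Finset.card_univ, nsmul_eq_mul]
    _ = ∑ g : G, Measure.map (fun ω => g * f (X ω)) P s := by
        refine Finset.sum_congr rfl fun g _ => ?_
        rw [hinv g]
    _ = ∑ g : G, P ((fun ω => g * f (X ω)) ⁻¹' s) := by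
        refine Finset.sum_congr rfl fun g _ => ?_
        rw [Measure.map_apply (hmeas g) hs]
    _ = ∑ g : G, ∫⁻ ω, ((fun ω => g * f (X ω)) ⁻¹' s).indicator 1 ω ∂P := by
        refine Finset.sum_congr rfl fun g _ => ?_
        rw [lintegral_indicator_one ((hmeas g) hs)]
    _ = ∫⁻ ω, ∑ g : G, ((fun ω => g * f (X ω)) ⁻¹' s).indicator 1 ω ∂P := by
        rw [lintegral_finset_sum]
        intro g _
        exact (measurable_one.indicator ((hmeas g) hs))
    _ = ∫⁻ _ω, (Fintype.card s : ENNReal) ∂P := by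
        refine lintegral_congr fun ω => ?_
        have : ∀ g : G, ((fun ω' => g * f (X ω')) ⁻¹' s).indicator
            (1 : Ω → ENNReal) ω = s.indicator (1 : G → ENNReal) (g * f (X ω)) := by
          intro g; simp [Set.indicator_apply]
        simp only [this]
        rw [← Equiv.sum_comp (Equiv.mulRight (f (X ω))⁻¹)
          (fun g => s.indicator (1 : G → ENNReal) (g * f (X ω)))]
        simp only [Equiv.coe_mulRight, inv_mul_cancel_right]
        simp only [Set.indicator_apply, Pi.one_apply, ← Set.mem_toFinset]
        rw [Finset.sum_ite_mem, Finset.univ_inter, Finset.sum_const, Set.toFinset_card]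
        simp
    _ = Fintype.card s := by simp
end

section
/- Let the product group S_n × S_n act measurably on a measurable space 𝒳, let X be a random element of 𝒳 whose law is invariant under the action of every element of S_n × S_n, and let Y be a random element of a measurable space 𝒴 independent of X. Let F₁, F₂ : 𝒳 × 𝒴 → S_n be measurable maps such that for all (σ, τ) ∈ S_n × S_n, x ∈ 𝒳, y ∈ 𝒴: F₁((σ, τ)·x, y) = σ ∘ F₁(x, y) and F₂((σ, τ)·x, y) = τ ∘ F₂(x, y). Then F₁(X, Y) and F₂(X, Y) are independent, and each is uniformly distributed on S_n. -/
open MeasureTheory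
open scoped ENNReal

/-- Theorem 3: two matching statistics that are equivariant respectively to the two factors
of an `S_n × S_n` action on `𝒳`, applied to `(X, Y)` with `X` having `S_n × S_n`-invariant
law and `Y` independent of `X`, are independent and each uniformly distributed on `S_n`. -/
theorem stmt_6 {n : ℕ} {𝒳 𝒴 Ω : Type*} [MeasurableSpace 𝒳] [MeasurableSpace 𝒴]
    [MeasurableSpace Ω] [MeasurableSpace (Equiv.Perm (Fin n))]
    [MulAction (Equiv.Perm (Fin n) × Equiv.Perm (Fin n)) 𝒳]
    (hsmul : ∀ g : Equiv.Perm (Fin n) × Equiv.Perm (Fin n),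
      Measurable fun x : 𝒳 => g • x)
    (P : Measure Ω) [IsProbabilityMeasure P]
    (X : Ω → 𝒳) (Y : Ω → 𝒴) (hX : Measurable X) (hY : Measurable Y)
    (hindep : ProbabilityTheory.IndepFun X Y P)
    (hinvX : ∀ g : Equiv.Perm (Fin n) × Equiv.Perm (Fin n),
      Measure.map (fun x => g • x) (Measure.map X P) = Measure.map X P)
    (F₁ F₂ : 𝒳 × 𝒴 → Equiv.Perm (Fin n)) (hF₁ : Measurable F₁) (hF₂ : Measurable F₂)
    (hF₁equiv : ∀ (σ τ : Equiv.Perm (Fin n)) (x : 𝒳) (y : 𝒴),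
      F₁ ((σ, τ) • x, y) = σ * F₁ (x, y))
    (hF₂equiv : ∀ (σ τ : Equiv.Perm (Fin n)) (x : 𝒳) (y : 𝒴),
      F₂ ((σ, τ) • x, y) = τ * F₂ (x, y)) :
    ProbabilityTheory.IndepFun (fun ω => F₁ (X ω, Y ω)) (fun ω => F₂ (X ω, Y ω)) P ∧
      Measure.map (fun ω => F₁ (X ω, Y ω)) P
        = (PMF.uniformOfFintype (Equiv.Perm (Fin n))).toMeasure ∧
      Measure.map (fun ω => F₂ (X ω, Y ω)) P
        = (PMF.uniformOfFintype (Equiv.Perm (Fin n))).toMeasure := by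
  classical
  let G := Equiv.Perm (Fin n)
  set G₁ : Ω → Equiv.Perm (Fin n) := fun ω => F₁ (X ω, Y ω) with hG₁def
  set G₂ : Ω → Equiv.Perm (Fin n) := fun ω => F₂ (X ω, Y ω) with hG₂def
  have hXY : Measurable (fun ω => (X ω, Y ω)) := hX.prodMk hY
  have hG₁ : Measurable G₁ := fun s hs => hXY (hF₁ hs)
  have hG₂ : Measurable G₂ := fun s hs => hXY (hF₂ hs)
  -- measurability of shifted versions
  have hshift : ∀ σ τ : G, (fun ω => (σ * G₁ ω, τ * G₂ ω))
      = (fun p : 𝒳 × 𝒴 => (F₁ p, F₂ p)) ∘ (fun ω => ((σ, τ) • X ω, Y ω)) := by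
    intro σ τ
    funext ω
    simp only [hG₁def, hG₂def, Function.comp_apply]
    rw [hF₁equiv, hF₂equiv]
  have hXg : ∀ g : G × G, Measurable (fun ω => g • X ω) :=
    fun g => (hsmul g).comp hX
  have hmeasshift : ∀ σ τ : G, Measurable (fun ω => (σ * G₁ ω, τ * G₂ ω)) := by
    intro σ τ
    rw [hshift σ τ]
    exact (hF₁.prodMk hF₂).comp ((hXg (σ, τ)).prodMk hY)
  -- joint invariance
  have hjoint : ∀ σ τ : G,
      Measure.map (fun ω => (σ * G₁ ω, τ * G₂ ω)) P
        = Measure.map (fun ω => (G₁ ω, G₂ ω)) P := by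
    intro σ τ
    have hindep' : ProbabilityTheory.IndepFun (fun ω => (σ, τ) • X ω) Y P :=
      hindep.comp (hsmul (σ, τ)) measurable_id
    have h1 : Measure.map (fun ω => ((σ, τ) • X ω, Y ω)) P
        = Measure.map (fun ω => (X ω, Y ω)) P := by
      rw [(ProbabilityTheory.indepFun_iff_map_prod_eq_prod_map_map
            (hXg (σ, τ)).aemeasurable hY.aemeasurable).mp hindep',
          (ProbabilityTheory.indepFun_iff_map_prod_eq_prod_map_map
            hX.aemeasurable hY.aemeasurable).mp hindep]
      congr 1
      have : (fun ω => (σ, τ) • X ω) = (fun x : 𝒳 => (σ, τ) • x) ∘ X := rfl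
      rw [this, ← Measure.map_map (hsmul (σ, τ)) hX]
      exact hinvX (σ, τ)
    calc Measure.map (fun ω => (σ * G₁ ω, τ * G₂ ω)) P
        = Measure.map ((fun p : 𝒳 × 𝒴 => (F₁ p, F₂ p)) ∘ (fun ω => ((σ, τ) • X ω, Y ω))) P := by
          rw [hshift σ τ]
      _ = Measure.map (fun p : 𝒳 × 𝒴 => (F₁ p, F₂ p))
            (Measure.map (fun ω => ((σ, τ) • X ω, Y ω)) P) :=
          (Measure.map_map (hF₁.prodMk hF₂) ((hXg (σ, τ)).prodMk hY)).symm
      _ = Measure.map (fun p : 𝒳 × 𝒴 => (F₁ p, F₂ p))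
            (Measure.map (fun ω => (X ω, Y ω)) P) := by rw [h1]
      _ = Measure.map (fun ω => (G₁ ω, G₂ ω)) P := Measure.map_map (hF₁.prodMk hF₂) hXY
  -- set-level invariance
  have hsetinv : ∀ (σ τ : G) (s t : Set G), MeasurableSet s → MeasurableSet t →
      P ((fun ω => σ * G₁ ω) ⁻¹' s ∩ (fun ω => τ * G₂ ω) ⁻¹' t)
        = P (G₁ ⁻¹' s ∩ G₂ ⁻¹' t) := by
    intro σ τ s t hs ht
    have h := congrArg (fun μ : Measure (G × G) => μ (s ×ˢ t)) (hjoint σ τ)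
    simpa [Measure.map_apply (hmeasshift σ τ) (hs.prod ht),
      Measure.map_apply (hG₁.prodMk hG₂) (hs.prod ht), Set.mk_preimage_prod] using h
  -- counting function
  set c : Set G → ℝ≥0∞ := fun s => ∑ σ : G, if σ ∈ s then 1 else 0 with hcdef
  have hcount : ∀ (s : Set G) (g : G), (∑ σ : G, if σ * g ∈ s then (1 : ℝ≥0∞) else 0) = c s := by
    intro s g
    exact Fintype.sum_equiv (Equiv.mulRight g) _ _ (fun σ => rfl)
  set card : ℝ≥0∞ := (Fintype.card G : ℝ≥0∞) with hcard
  have hcuniv : c Set.univ = card := by simp [hcdef, hcard]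
  have hcard0 : card ≠ 0 := by
    simp [hcard, Fintype.card_ne_zero]
  have hcardtop : card ≠ ⊤ := by simp [hcard]
  -- key counting identity
  have key : ∀ s t : Set G, MeasurableSet s → MeasurableSet t →
      card * card * P (G₁ ⁻¹' s ∩ G₂ ⁻¹' t) = c s * c t := by
    intro s t hs ht
    have hA : ∀ σ τ : G, MeasurableSet ((fun ω => σ * G₁ ω) ⁻¹' s ∩ (fun ω => τ * G₂ ω) ⁻¹' t) := by
      intro σ τ
      have h1 : Measurable (fun ω => σ * G₁ ω) := (measurable_fst.comp (hmeasshift σ τ))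
      have h2 : Measurable (fun ω => τ * G₂ ω) := (measurable_snd.comp (hmeasshift σ τ))
      exact (h1 hs).inter (h2 ht)
    calc card * card * P (G₁ ⁻¹' s ∩ G₂ ⁻¹' t)
        = ∑ σ : G, ∑ τ : G,
            P ((fun ω => σ * G₁ ω) ⁻¹' s ∩ (fun ω => τ * G₂ ω) ⁻¹' t) := by
          simp only [fun σ τ : G => hsetinv σ τ s t hs ht]
          simp [Finset.sum_const, hcard, mul_assoc]
      _ = ∑ σ : G, ∑ τ : G, ∫⁻ ω, ((fun ω => σ * G₁ ω) ⁻¹' s ∩ (fun ω => τ * G₂ ω) ⁻¹' t).indicator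
            (1 : Ω → ℝ≥0∞) ω ∂P := by
          refine Finset.sum_congr rfl fun σ _ => Finset.sum_congr rfl fun τ _ => ?_
          exact (lintegral_indicator_one (hA σ τ)).symm
      _ = ∑ σ : G, ∫⁻ ω, ∑ τ : G, ((fun ω => σ * G₁ ω) ⁻¹' s ∩ (fun ω => τ * G₂ ω) ⁻¹' t).indicator
            (1 : Ω → ℝ≥0∞) ω ∂P := by
          refine Finset.sum_congr rfl fun σ _ => ?_
          exact (lintegral_finset_sum _ (fun τ _ => measurable_one.indicator (hA σ τ))).symm
      _ = ∫⁻ ω, ∑ σ : G, ∑ τ : G, ((fun ω => σ * G₁ ω) ⁻¹' s ∩ (fun ω => τ * G₂ ω) ⁻¹' t).indicator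
            (1 : Ω → ℝ≥0∞) ω ∂P := by
          exact (lintegral_finset_sum _ (fun σ _ => Finset.measurable_sum _
            fun τ _ => measurable_one.indicator (hA σ τ))).symm
      _ = ∫⁻ _, c s * c t ∂P := by
          refine lintegral_congr fun ω => ?_
          have : ∀ σ τ : G, ((fun ω => σ * G₁ ω) ⁻¹' s ∩ (fun ω => τ * G₂ ω) ⁻¹' t).indicator
              (1 : Ω → ℝ≥0∞) ω
              = (if σ * G₁ ω ∈ s then (1 : ℝ≥0∞) else 0) * (if τ * G₂ ω ∈ t then 1 else 0) := by
            intro σ τ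
            by_cases h1 : σ * G₁ ω ∈ s <;> by_cases h2 : τ * G₂ ω ∈ t <;>
              simp [Set.indicator, h1, h2, Set.mem_inter_iff]
          simp only [this, ← Finset.mul_sum, ← Finset.sum_mul]
          rw [hcount s (G₁ ω), hcount t (G₂ ω)]
      _ = c s * c t := by simp
  -- marginals
  have hmarg₁ : ∀ s : Set G, MeasurableSet s → card * P (G₁ ⁻¹' s) = c s := by
    intro s hs
    have h := key s Set.univ hs MeasurableSet.univ
    rw [hcuniv] at h
    simp only [Set.preimage_univ, Set.inter_univ] at h
    refine (ENNReal.mul_right_inj hcard0 hcardtop).mp ?_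
    calc card * (card * P (G₁ ⁻¹' s)) = card * card * P (G₁ ⁻¹' s) := by ring
      _ = c s * card := h
      _ = card * c s := by ring
  have hmarg₂ : ∀ t : Set G, MeasurableSet t → card * P (G₂ ⁻¹' t) = c t := by
    intro t ht
    have h := key Set.univ t MeasurableSet.univ ht
    rw [hcuniv] at h
    simp only [Set.preimage_univ, Set.univ_inter] at h
    refine (ENNReal.mul_right_inj hcard0 hcardtop).mp ?_
    calc card * (card * P (G₂ ⁻¹' t)) = card * card * P (G₂ ⁻¹' t) := by ring
      _ = card * c t := h
  -- uniform distributions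
  have huniform : ∀ (Z : Ω → G), Measurable Z → (∀ s : Set G, MeasurableSet s →
      card * P (Z ⁻¹' s) = c s) →
      Measure.map Z P = (PMF.uniformOfFintype G).toMeasure := by
    intro Z hZ hmarg
    refine Measure.ext fun s hs => ?_
    rw [Measure.map_apply hZ hs, PMF.toMeasure_apply _ hs]
    have h1 : P (Z ⁻¹' s) = c s * card⁻¹ := by
      rw [← hmarg s hs]
      rw [mul_comm card (P (Z ⁻¹' s)), mul_assoc, ENNReal.mul_inv_cancel hcard0 hcardtop, mul_one]
    rw [h1, tsum_fintype]
    rw [hcdef, Finset.sum_mul]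
    refine Finset.sum_congr rfl fun σ _ => ?_
    by_cases h : σ ∈ s <;> simp [Set.indicator, h, PMF.uniformOfFintype_apply, hcard]
  refine ⟨?_, huniform G₁ hG₁ hmarg₁, huniform G₂ hG₂ hmarg₂⟩
  rw [ProbabilityTheory.indepFun_iff_measure_inter_preimage_eq_mul]
  intro s t hs ht
  refine (ENNReal.mul_right_inj (a := card * card) (mul_ne_zero hcard0 hcard0)
    (ENNReal.mul_ne_top hcardtop hcardtop)).mp ?_
  calc card * card * P (G₁ ⁻¹' s ∩ G₂ ⁻¹' t) = c s * c t := key s t hs ht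
    _ = (card * P (G₁ ⁻¹' s)) * (card * P (G₂ ⁻¹' t)) := by rw [hmarg₁ s hs, hmarg₂ t ht]
    _ = card * card * (P (G₁ ⁻¹' s) * P (G₂ ⁻¹' t)) := by ring
end

section
/- Let G, U ∈ ℝ^{h×d}, D ∈ ℝ^{d×h}, let σ : ℝ → ℝ be applied entrywise, and for a row vector u ∈ ℝ^{1×d} define MLP(u; G, U, D) = [σ(uGᵀ) ⊙ (uUᵀ)] Dᵀ, where ⊙ denotes the entrywise (Hadamard) product. Let R ∈ ℝ^{d×d} be orthogonal, let γ, γ' ∈ ℝ^d have all entries nonzero, and let c ≠ 0 be a scalar. Define u' = u · diag(γ)⁻¹ R diag(γ'), G' = G · diag(γ) R diag(γ')⁻¹, U' = c · U · diag(γ) R diag(γ')⁻¹, and D' = (1/c) · Rᵀ D. Then MLP(u'; G', U', D') = MLP(u; G, U, D) · R. -/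
open Matrix

/-- MLP step of the output-preserving rotation (Theorem 5 / Appendix F): rotating the input
by `diag(γ)⁻¹ R diag(γ')`, the gate/up projections by `diag(γ) R diag(γ')⁻¹` (the up
projection also scaled by `c`), and the down projection by `(1/c) Rᵀ` rotates the GLU MLP
output exactly by `R`. -/
theorem stmt_10 {h d : ℕ} (G U : Matrix (Fin h) (Fin d) ℝ) (D : Matrix (Fin d) (Fin h) ℝ)
    (σ : ℝ → ℝ) (u : Matrix (Fin 1) (Fin d) ℝ)
    (R : Matrix (Fin d) (Fin d) ℝ) (hR : R * Rᵀ = 1 ∧ Rᵀ * R = 1)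
    (γ γ' : Fin d → ℝ) (hγ : ∀ i, γ i ≠ 0) (hγ' : ∀ i, γ' i ≠ 0)
    (c : ℝ) (hc : c ≠ 0)
    (MLP : Matrix (Fin 1) (Fin d) ℝ → Matrix (Fin h) (Fin d) ℝ →
      Matrix (Fin h) (Fin d) ℝ → Matrix (Fin d) (Fin h) ℝ → Matrix (Fin 1) (Fin d) ℝ)
    (hMLP : MLP = fun v Gm Um Dm =>
      (Matrix.hadamard ((v * Gmᵀ).map σ) (v * Umᵀ)) * Dmᵀ) :
    MLP (u * (Matrix.diagonal γ)⁻¹ * R * Matrix.diagonal γ')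
        (G * Matrix.diagonal γ * R * (Matrix.diagonal γ')⁻¹)
        (c • (U * Matrix.diagonal γ * R * (Matrix.diagonal γ')⁻¹))
        (c⁻¹ • (Rᵀ * D))
      = MLP u G U D * R := by
  subst hMLP
  have hone : ∀ (v : Fin d → ℝ), (∀ i, v i ≠ 0) →
      Matrix.diagonal v * Matrix.diagonal (fun i => (v i)⁻¹) = 1 := by
    intro v hv
    rw [Matrix.diagonal_mul_diagonal]
    have : (fun i => v i * (v i)⁻¹) = fun _ => (1 : ℝ) :=
      funext fun i => mul_inv_cancel₀ (hv i)
    rw [this, Matrix.diagonal_one]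
  have hone' : ∀ (v : Fin d → ℝ), (∀ i, v i ≠ 0) →
      Matrix.diagonal (fun i => (v i)⁻¹) * Matrix.diagonal v = 1 := by
    intro v hv
    rw [Matrix.diagonal_mul_diagonal]
    have : (fun i => (v i)⁻¹ * v i) = fun _ => (1 : ℝ) :=
      funext fun i => inv_mul_cancel₀ (hv i)
    rw [this, Matrix.diagonal_one]
  have hdγ : (Matrix.diagonal γ)⁻¹ = Matrix.diagonal (fun i => (γ i)⁻¹) :=
    Matrix.inv_eq_right_inv (hone γ hγ)
  have hdγ' : (Matrix.diagonal γ')⁻¹ = Matrix.diagonal (fun i => (γ' i)⁻¹) :=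
    Matrix.inv_eq_right_inv (hone γ' hγ')
  have hγγ := hone' γ hγ
  have hγ'γ' := hone γ' hγ'
  have key : ∀ (A : Matrix (Fin h) (Fin d) ℝ),
      u * (Matrix.diagonal γ)⁻¹ * R * Matrix.diagonal γ' *
        (A * Matrix.diagonal γ * R * (Matrix.diagonal γ')⁻¹)ᵀ = u * Aᵀ := by
    intro A
    rw [hdγ, hdγ']
    simp only [Matrix.transpose_mul, Matrix.diagonal_transpose, ← Matrix.mul_assoc]
    rw [Matrix.mul_assoc _ (Matrix.diagonal γ') _, hγ'γ', Matrix.mul_one,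
      Matrix.mul_assoc _ R Rᵀ, hR.1, Matrix.mul_one,
      Matrix.mul_assoc u _ _, hγγ, Matrix.mul_one]
  simp only []
  rw [key G, Matrix.transpose_smul, Matrix.mul_smul, key U,
    Matrix.hadamard_smul, Matrix.transpose_smul, Matrix.transpose_mul,
    Matrix.transpose_transpose, Matrix.smul_mul, Matrix.mul_smul, smul_smul,
    mul_inv_cancel₀ hc, one_smul, ← Matrix.mul_assoc]
end

section
/- For Z ∈ ℝ^{n×n}, define the row-wise softmax by softmax(Z)_{i,j} = exp(Z_{i,j}) / Σ_{k=1}^{n} exp(Z_{i,k}). For z ∈ ℝ^{n×d} and W_Q, W_K, W_V, W_O ∈ ℝ^{d×d}, define the single-head self-attention output Attn(z; W_Q, W_K, W_V, W_O) = softmax( z W_Qᵀ (z W_Kᵀ)ᵀ / √d ) · z W_Vᵀ W_Oᵀ. Let R_emb, R ∈ ℝ^{d×d} be orthogonal and let γ, γ' ∈ ℝ^d have all entries nonzero. Define z' = z · diag(γ)⁻¹ R_emb diag(γ'), W_Q' = R W_Q diag(γ) R_emb diag(γ')⁻¹, W_K' = R W_K diag(γ) R_emb diag(γ')⁻¹,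 W_V' = W_V diag(γ) R_emb diag(γ')⁻¹, and W_O' = R_embᵀ W_O. Then Attn(z'; W_Q', W_K', W_V', W_O') = Attn(z; W_Q, W_K, W_V, W_O) · R_emb. -/
open Matrix

/-- Self-attention step of the output-preserving rotation (Theorem 5 / Appendix F):
rotating the residual stream by `R_emb`, the query/key matrices by `R`, and replacing
layernorm weights `γ` by `γ'` rotates the attention output exactly by `R_emb`. -/
theorem stmt_11 {n d : ℕ}
    (z : Matrix (Fin n) (Fin d) ℝ)
    (WQ WK WV WO : Matrix (Fin d) (Fin d) ℝ)
    (Remb R : Matrix (Fin d) (Fin d) ℝ)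
    (hRemb : Remb * Rembᵀ = 1 ∧ Rembᵀ * Remb = 1)
    (hR : R * Rᵀ = 1 ∧ Rᵀ * R = 1)
    (γ γ' : Fin d → ℝ) (hγ : ∀ i, γ i ≠ 0) (hγ' : ∀ i, γ' i ≠ 0)
    (softmax : Matrix (Fin n) (Fin n) ℝ → Matrix (Fin n) (Fin n) ℝ)
    (hsoftmax : softmax = fun Z =>
      Matrix.of fun i j => Real.exp (Z i j) / ∑ k, Real.exp (Z i k))
    (Attn : Matrix (Fin n) (Fin d) ℝ → Matrix (Fin d) (Fin d) ℝ →
      Matrix (Fin d) (Fin d) ℝ → Matrix (Fin d) (Fin d) ℝ →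
      Matrix (Fin d) (Fin d) ℝ → Matrix (Fin n) (Fin d) ℝ)
    (hAttn : Attn = fun x Q K V O =>
      softmax ((Real.sqrt d)⁻¹ • ((x * Qᵀ) * (x * Kᵀ)ᵀ)) * (x * Vᵀ * Oᵀ)) :
    Attn (z * (Matrix.diagonal γ)⁻¹ * Remb * Matrix.diagonal γ')
        (R * WQ * Matrix.diagonal γ * Remb * (Matrix.diagonal γ')⁻¹)
        (R * WK * Matrix.diagonal γ * Remb * (Matrix.diagonal γ')⁻¹)
        (WV * Matrix.diagonal γ * Remb * (Matrix.diagonal γ')⁻¹)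
        (Rembᵀ * WO)
      = Attn z WQ WK WV WO * Remb := by
  have hDdet : IsUnit (Matrix.diagonal γ).det := by
    simp [Matrix.det_diagonal, Finset.prod_ne_zero_iff, hγ, isUnit_iff_ne_zero]
  have hD'det : IsUnit (Matrix.diagonal γ').det := by
    simp [Matrix.det_diagonal, Finset.prod_ne_zero_iff, hγ', isUnit_iff_ne_zero]
  set D := Matrix.diagonal γ with hDdef
  set D' := Matrix.diagonal γ' with hD'def
  have hD1 : D⁻¹ * D = 1 := Matrix.nonsing_inv_mul _ hDdet
  have hD'1 : D' * D'⁻¹ = 1 := Matrix.mul_nonsing_inv _ hD'det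
  have hDT : Dᵀ = D := Matrix.diagonal_transpose γ
  have hD'IT : (D'⁻¹)ᵀ = D'⁻¹ := by
    rw [Matrix.transpose_nonsing_inv, hD'def, Matrix.diagonal_transpose]
  have key : ∀ W : Matrix (Fin d) (Fin d) ℝ,
      (z * D⁻¹ * Remb * D') * (W * D * Remb * D'⁻¹)ᵀ = z * Wᵀ := by
    intro W
    simp only [Matrix.transpose_mul, hDT, hD'IT, Matrix.mul_assoc]
    rw [← Matrix.mul_assoc D' D'⁻¹, hD'1, Matrix.one_mul,
      ← Matrix.mul_assoc Remb Rembᵀ, hRemb.1, Matrix.one_mul,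
      ← Matrix.mul_assoc D⁻¹ D, hD1, Matrix.one_mul]
  have hQK : (z * D⁻¹ * Remb * D') * (R * WQ * D * Remb * D'⁻¹)ᵀ *
      ((z * D⁻¹ * Remb * D') * (R * WK * D * Remb * D'⁻¹)ᵀ)ᵀ
      = (z * WQᵀ) * (z * WKᵀ)ᵀ := by
    rw [key (R * WQ), key (R * WK)]
    simp only [Matrix.transpose_mul, Matrix.transpose_transpose, Matrix.mul_assoc]
    rw [← Matrix.mul_assoc Rᵀ R, hR.2, Matrix.one_mul]
  have hVO : (z * D⁻¹ * Remb * D') * (WV * D * Remb * D'⁻¹)ᵀ * (Rembᵀ * WO)ᵀ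
      = z * WVᵀ * WOᵀ * Remb := by
    rw [key WV]
    simp only [Matrix.transpose_mul, Matrix.transpose_transpose, Matrix.mul_assoc]
  rw [hAttn]
  simp only
  rw [hQK, hVO]
  simp only [Matrix.mul_assoc]
end
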